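/- Let an Eulerian graph with m edges be given. Then the spectral gap of the simple random walk on it satisfies λ ≥ 1 − cos(2π/m); that is, for every function f : V → ℝ, ∑_{x,y∈V} (f(x) − f(y))² π(x) P(x,y) ≥ (1 − cos(2π/m)) · ∑_{x,y∈V} (f(x) − f(y))² π(x) π(y). -/

import Mathlib

open scoped Classical

noncomputable section

namespace Stmt0

set_option linter.unusedSectionVars false
set_option maxHeartbeats 1000000

variable {V : Type*} [Fintype V]

/-- out-degree of a vertex: number of edges leaving `x` (with multiplicity). -/
def edeg (E : V → V → ℕ) (x : V) : ℕ := ∑ y, E x y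

/-- total number of (directed) edges. -/
def numEdges (E : V → V → ℕ) : ℕ := ∑ x, ∑ y, E x y

/-- simple random walk transition kernel `P(x,y) = E(x,y)/deg(x)`. -/
def srw (E : V → V → ℕ) (x y : V) : ℝ := (E x y : ℝ) / (edeg E x : ℝ)

/-- stationary distribution `π(x) = deg(x)/m`. -/
def statPi (E : V → V → ℕ) (x : V) : ℝ := (edeg E x : ℝ) / (numEdges E : ℝ)

/-- `IsWalk x L y`: `L` is a list of consecutive directed edges from `x` to `y`. -/
def IsWalk : V → List (V × V) → V → Prop
  | x, [], y => x = y
  | x, e :: L, y => e.1 = x ∧ IsWalk e.2 L y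

/-- number of occurrences of the edge `(a,b)` in the edge list `L`. -/
def ecount (L : List (V × V)) (a b : V) : ℕ := L.countP (fun e => e = (a, b))

theorem ecount_nil (a b : V) : ecount ([] : List (V × V)) a b = 0 := rfl

theorem ecount_cons (e : V × V) (L : List (V × V)) (a b : V) :
    ecount (e :: L) a b = ecount L a b + (if e = (a, b) then 1 else 0) := by
  simp [ecount, List.countP_cons]

theorem ecount_append (L M : List (V × V)) (a b : V) :
    ecount (L ++ M) a b = ecount L a b + ecount M a b := by
  simp [ecount, List.countP_append]

theorem ecount_pos_iff_mem {L : List (V × V)} {a b : V} :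
    0 < ecount L a b ↔ (a, b) ∈ L := by
  simp [ecount, List.countP_pos_iff]

theorem isWalk_append {A B : List (V × V)} {x y z : V}
    (hA : IsWalk x A y) (hB : IsWalk y B z) : IsWalk x (A ++ B) z := by
  induction A generalizing x with
  | nil => cases hA; simpa using hB
  | cons e A ih => exact ⟨hA.1, ih hA.2⟩

theorem walk_balance {L : List (V × V)} {x y : V} (h : IsWalk x L y) (v : V) :
    L.countP (fun e => e.1 = v) + (if y = v then 1 else 0)
      = L.countP (fun e => e.2 = v) + (if x = v then 1 else 0) := by
  induction L generalizing x with
  | nil => cases h; rfl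
  | cons e L ih =>
    obtain ⟨h1, h2⟩ := h
    rw [List.countP_cons, List.countP_cons]
    have := ih h2
    subst h1
    by_cases hv1 : e.1 = v <;> by_cases hv2 : e.2 = v <;>
      simp [hv1, hv2] at this ⊢ <;> omega

theorem walk_split {L : List (V × V)} {x y : V} (h : IsWalk x L y) {e : V × V}
    (he : e ∈ L) : ∃ A B, L = A ++ e :: B ∧ IsWalk x A e.1 ∧ IsWalk e.2 B y := by
  induction L generalizing x with
  | nil => simp at he
  | cons e' L ih =>
    obtain ⟨h1, h2⟩ := h
    rcases List.mem_cons.mp he with rfl | hmem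
    · exact ⟨[], L, rfl, h1.symm, h2⟩
    · obtain ⟨A, B, hAB, hA, hB⟩ := ih h2 hmem
      exact ⟨e' :: A, B, by rw [hAB]; rfl, ⟨h1, hA⟩, hB⟩

theorem sum_ecount_fst (L : List (V × V)) (x : V) :
    ∑ y, ecount L x y = L.countP (fun e => e.1 = x) := by
  induction L with
  | nil => simp [ecount]
  | cons e L ih =>
    rw [List.countP_cons]
    simp only [ecount_cons, Finset.sum_add_distrib, ih]
    congr 1
    rcases e with ⟨a, b⟩
    by_cases h1 : a = x
    · subst h1; simp [Prod.ext_iff]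
    · simp [Prod.ext_iff, h1]


theorem sum_ecount_snd (L : List (V × V)) (y : V) :
    ∑ x, ecount L x y = L.countP (fun e => e.2 = y) := by
  induction L with
  | nil => simp [ecount]
  | cons e L ih =>
    rw [List.countP_cons]
    simp only [ecount_cons, Finset.sum_add_distrib, ih]
    congr 1
    rcases e with ⟨a, b⟩
    by_cases h2 : b = y
    · subst h2; simp [Prod.ext_iff]
    · simp [Prod.ext_iff, h2]

theorem sum_sum_ecount (L : List (V × V)) :
    ∑ x, ∑ y, ecount L x y = L.length := by
  induction L with
  | nil => simp [ecount]
  | cons e L ih =>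
    simp only [ecount_cons, Finset.sum_add_distrib, ih, List.length_cons]
    congr 1
    rcases e with ⟨a, b⟩
    rw [Finset.sum_comm]
    by_cases hb : True
    · calc ∑ y, ∑ x, (if ((a,b) : V × V) = (x,y) then 1 else 0)
          = ∑ y, (if b = y then 1 else 0) := by
            refine Finset.sum_congr rfl fun y _ => ?_
            by_cases h2 : b = y
            · subst h2; simp [Prod.ext_iff]
            · simp [Prod.ext_iff, h2]
        _ = 1 := by simp
    · simp at hb

/-- A walk with multiplicities below a balanced `F`, not yet back at its start,
can always be extended. -/
theorem walk_extend_step {F : V → V → ℕ} (hbal : ∀ x, edeg F x = ∑ y, F y x)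
    {U : List (V × V)} {v c : V} (hW : IsWalk v U c) (hne : c ≠ v)
    (hle : ∀ a b, ecount U a b ≤ F a b) : ∃ y, ecount U c y < F c y := by
  by_contra hcon
  push_neg at hcon
  have heq : ∀ y, ecount U c y = F c y := fun y => le_antisymm (hle c y) (hcon y)
  have h1 : edeg F c = U.countP (fun e => e.1 = c) := by
    rw [← sum_ecount_fst]
    exact Finset.sum_congr rfl fun y _ => (heq y).symm
  have h2 : U.countP (fun e => e.2 = c) ≤ ∑ x, F x c := by
    rw [← sum_ecount_snd]
    exact Finset.sum_le_sum fun x _ => hle x c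
  have h3 := walk_balance hW c
  rw [if_pos rfl, if_neg (fun h => hne h.symm)] at h3
  have h4 := hbal c
  omega

/-- From any vertex of positive out-degree in a balanced graph one can extract a
nonempty closed walk whose edge multiplicities are bounded by `F`. -/
theorem exists_closed_walk {F : V → V → ℕ} (hbal : ∀ x, edeg F x = ∑ y, F y x)
    {v : V} (hv : 0 < edeg F v) :
    ∃ L : List (V × V), L ≠ [] ∧ IsWalk v L v ∧ ∀ a b, ecount L a b ≤ F a b := by
  -- auxiliary induction on the slack `n`
  have aux : ∀ n (U : List (V × V)) (c : V), IsWalk v U c → U ≠ [] →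
      (∀ a b, ecount U a b ≤ F a b) → numEdges F ≤ U.length + n →
      ∃ L : List (V × V), L ≠ [] ∧ IsWalk v L v ∧ ∀ a b, ecount L a b ≤ F a b := by
    intro n
    induction n with
    | zero =>
      intro U c hW hne hle hlen
      by_cases hcv : c = v
      · exact ⟨U, hne, hcv ▸ hW, hle⟩
      · exfalso
        obtain ⟨y, hy⟩ := walk_extend_step hbal hW hcv hle
        have : U.length < numEdges F := by
          rw [← sum_sum_ecount U]
          refine Finset.sum_lt_sum (fun x _ => Finset.sum_le_sum fun b _ => hle x b)
            ⟨c, Finset.mem_univ c, Finset.sum_lt_sum (fun b _ => hle c b)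
              ⟨y, Finset.mem_univ y, hy⟩⟩
        omega
    | succ n ih =>
      intro U c hW hne hle hlen
      by_cases hcv : c = v
      · exact ⟨U, hne, hcv ▸ hW, hle⟩
      · obtain ⟨y, hy⟩ := walk_extend_step hbal hW hcv hle
        refine ih (U ++ [(c, y)]) y (isWalk_append hW ⟨rfl, rfl⟩) (by simp) ?_ ?_
        · intro a b
          rw [ecount_append]
          by_cases hab : ((c, y) : V × V) = (a, b)
          · rcases Prod.ext_iff.mp hab with ⟨rfl, rfl⟩
            simpa [ecount_cons, ecount_nil, hab] using hy
          · simpa [ecount_cons, ecount_nil, hab] using hle a b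
        · simp only [List.length_append, List.length_cons, List.length_nil]
          omega
  -- start with a single edge out of `v`
  obtain ⟨y0, hy0⟩ : ∃ y, 0 < F v y := by
    by_contra hcon
    push_neg at hcon
    simp only [Nat.le_zero] at hcon
    have : edeg F v = 0 := Finset.sum_eq_zero fun y _ => hcon y
    omega
  refine aux (numEdges F) [(v, y0)] y0 ⟨rfl, rfl⟩ (by simp) ?_ (by simp)
  intro a b
  by_cases hab : ((v, y0) : V × V) = (a, b)
  · rcases Prod.ext_iff.mp hab with ⟨rfl, rfl⟩
    simp [ecount_cons, ecount_nil, hab]; omega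
  · simp [ecount_cons, ecount_nil, hab]


theorem walk_fst_head {x y : V} {L : List (V × V)} (h : IsWalk x L y) (hne : L ≠ []) :
    ∃ w, (x, w) ∈ L := by
  cases L with
  | nil => exact absurd rfl hne
  | cons e L =>
    refine ⟨e.2, ?_⟩
    have : e = (x, e.2) := by rw [← h.1]
    rw [← this]; exact List.mem_cons_self

theorem closed_snd_mem_fst {x : V} {L : List (V × V)} (h : IsWalk x L x)
    (hne : L ≠ []) {p q : V} (hpq : (p, q) ∈ L) : ∃ r, (q, r) ∈ L := by
  obtain ⟨A, B, hAB, hA, hB⟩ := walk_split h hpq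
  cases B with
  | nil =>
    cases hB
    exact walk_fst_head h hne
  | cons e B =>
    have h1 : e.1 = q := hB.1
    refine ⟨e.2, ?_⟩
    have : e = (q, e.2) := by rw [← h1]
    rw [hAB, ← this]
    simp

theorem exists_crossing {R : V → V → Prop} {S : Set V} {x : V} (hx : x ∈ S) :
    ∀ {a : V}, Relation.ReflTransGen R x a → a ∉ S → ∃ p q, R p q ∧ p ∈ S ∧ q ∉ S := by
  intro a h
  induction h with
  | refl => intro ha; exact absurd hx ha
  | @tail b c h1 h2 ih =>
    intro ha
    by_cases hb : b ∈ S
    · exact ⟨b, c, h2, hb, ha⟩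
    · exact ih hb

theorem exists_euler_circuit [Nonempty V] (E : V → V → ℕ)
    (hbal : ∀ x, edeg E x = ∑ y, E y x)
    (hdegpos : ∀ x, 1 ≤ edeg E x)
    (hconn : ∀ x y : V, Relation.ReflTransGen (fun a b => 0 < E a b) x y) :
    ∃ (x : V) (L : List (V × V)), L ≠ [] ∧ IsWalk x L x ∧
      ∀ a b, ecount L a b = E a b := by
  obtain ⟨x0⟩ := ‹Nonempty V›
  have aux : ∀ (k : ℕ) (W : List (V × V)), IsWalk x0 W x0 → W ≠ [] →
      (∀ a b, ecount W a b ≤ E a b) → numEdges E ≤ W.length + k →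
      ∃ L : List (V × V), L ≠ [] ∧ IsWalk x0 L x0 ∧ ∀ a b, ecount L a b = E a b := by
    intro k
    induction k with
    | zero =>
      intro W hW hne hle hlen
      by_cases hEq : ∀ a b, E a b ≤ ecount W a b
      · exact ⟨W, hne, hW, fun a b => le_antisymm (hle a b) (hEq a b)⟩
      · exfalso
        push_neg at hEq
        obtain ⟨a0, b0, hab⟩ := hEq
        have : W.length < numEdges E := by
          rw [← sum_sum_ecount W]
          exact Finset.sum_lt_sum (fun x _ => Finset.sum_le_sum fun b _ => hle x b)
            ⟨a0, Finset.mem_univ a0, Finset.sum_lt_sum (fun b _ => hle a0 b)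
              ⟨b0, Finset.mem_univ b0, hab⟩⟩
        omega
    | succ k ih =>
      intro W hW hne hle hlen
      by_cases hEq : ∀ a b, E a b ≤ ecount W a b
      · exact ⟨W, hne, hW, fun a b => le_antisymm (hle a b) (hEq a b)⟩
      push_neg at hEq
      obtain ⟨a0, b0, hab⟩ := hEq
      set Erest : V → V → ℕ := fun a b => E a b - ecount W a b with hErest
      have hsplit : ∀ a b, E a b = ecount W a b + Erest a b := fun a b => by
        have := hle a b; simp only [hErest]; omega
      have hWbal : ∀ v, W.countP (fun e => e.1 = v) = W.countP (fun e => e.2 = v) := by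
        intro v
        have := walk_balance hW v
        omega
      have hbalrest : ∀ v, edeg Erest v = ∑ y, Erest y v := by
        intro v
        have h1 : edeg E v = edeg Erest v + ∑ y, ecount W v y := by
          rw [edeg, edeg, ← Finset.sum_add_distrib]
          exact Finset.sum_congr rfl fun y _ => by have := hsplit v y; omega
        have h2 : (∑ y, E y v) = (∑ y, Erest y v) + ∑ y, ecount W y v := by
          rw [← Finset.sum_add_distrib]
          exact Finset.sum_congr rfl fun y _ => by have := hsplit y v; omega
        have h3 := hbal v
        rw [sum_ecount_fst] at h1
        rw [sum_ecount_snd] at h2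
        have h4 := hWbal v
        omega
      -- find a vertex on W with positive remaining out-degree
      have hfind : ∃ v w, (v, w) ∈ W ∧ 0 < edeg Erest v := by
        by_contra hcon
        push_neg at hcon
        have ha0 : 0 < edeg Erest a0 := by
          have h5 : 0 < Erest a0 b0 := by simp only [hErest]; omega
          calc 0 < Erest a0 b0 := h5
            _ ≤ edeg Erest a0 :=
              Finset.single_le_sum (fun y _ => Nat.zero_le _) (Finset.mem_univ b0)
        have ha0S : ¬∃ w, (a0, w) ∈ W := by
          intro ⟨w, hw⟩
          have := hcon a0 w hw
          omega
        have hx0S : ∃ w, (x0, w) ∈ W := walk_fst_head hW hne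
        obtain ⟨p, q, hpq, hpS, hqS⟩ :=
          exists_crossing (S := {v | ∃ w, (v, w) ∈ W}) hx0S (hconn x0 a0) ha0S
        obtain ⟨w, hw⟩ := hpS
        have hp0 : edeg Erest p = 0 := by
          have := hcon p w hw; omega
        have hrest0 : Erest p q = 0 := by
          have : Erest p q ≤ edeg Erest p :=
            Finset.single_le_sum (fun y _ => Nat.zero_le _) (Finset.mem_univ q)
          omega
        have hmem : (p, q) ∈ W := by
          rw [← ecount_pos_iff_mem]
          have := hsplit p q
          omega
        exact hqS (closed_snd_mem_fst hW hne hmem)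
      obtain ⟨v, w0, hvw, hdv⟩ := hfind
      obtain ⟨C, hCne, hCwalk, hCle⟩ := exists_closed_walk hbalrest hdv
      obtain ⟨A, B, hAB, hA, hB⟩ := walk_split hW hvw
      refine ih (A ++ (C ++ (v, w0) :: B)) (isWalk_append hA (isWalk_append hCwalk ⟨rfl, hB⟩))
        (by simp) ?_ ?_
      · intro a b
        have h1 : ecount (A ++ (C ++ (v, w0) :: B)) a b = ecount W a b + ecount C a b := by
          rw [hAB]
          simp only [ecount_append, ecount_cons]
          omega
        rw [h1, hsplit a b]
        exact Nat.add_le_add_left (hCle a b) _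
      · have h1 : (A ++ (C ++ (v, w0) :: B)).length = W.length + C.length := by
          rw [hAB]; simp; omega
        have h2 : 1 ≤ C.length := List.length_pos_iff.mpr hCne
        omega
  obtain ⟨W0, hW0ne, hW0walk, hW0le⟩ := exists_closed_walk hbal (hdegpos x0)
  exact ⟨x0, aux (numEdges E) W0 hW0walk hW0ne hW0le (by omega)⟩


open Finset Complex

/-- orthogonality of characters on `ZMod m`. -/
theorem char_orthog {m : ℕ} [NeZero m] (t : ZMod m) :
    ∑ i : ZMod m, ZMod.stdAddChar (t * i) = if t = 0 then (m : ℂ) else 0 := by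
  split_ifs with h
  · simp only [h, zero_mul, AddChar.map_zero_eq_one, Finset.sum_const, Finset.card_univ,
      ZMod.card, nsmul_eq_mul, mul_one]
  · have hne : AddChar.mulShift ZMod.stdAddChar t ≠ 1 := ZMod.isPrimitive_stdAddChar m h
    have : ∑ i : ZMod m, AddChar.mulShift ZMod.stdAddChar t i = 0 := by
      rw [AddChar.sum_eq_zero_iff_ne_zero]
      exact hne
    simpa [AddChar.mulShift_apply] using this

theorem conj_stdAddChar {m : ℕ} [NeZero m] (j : ZMod m) :
    (starRingEnd ℂ) (ZMod.stdAddChar j) = ZMod.stdAddChar (-j) := by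
  have h1 : ZMod.stdAddChar j * ZMod.stdAddChar (-j) = 1 := by
    rw [← AddChar.map_add_eq_mul, add_neg_cancel, AddChar.map_zero_eq_one]
  have h2 : (starRingEnd ℂ) (ZMod.stdAddChar j) * ZMod.stdAddChar j = 1 := by
    rw [mul_comm, mul_conj]
    norm_cast
    rw [ZMod.stdAddChar_apply]
    exact Complex.normSq_eq_norm_sq _ ▸ by simp [Circle.norm_coe]
  calc (starRingEnd ℂ) (ZMod.stdAddChar j)
      = (starRingEnd ℂ) (ZMod.stdAddChar j) * (ZMod.stdAddChar j * ZMod.stdAddChar (-j)) := by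
        rw [h1, mul_one]
    _ = ZMod.stdAddChar (-j) := by rw [← mul_assoc, h2, one_mul]

theorem stdAddChar_re {m : ℕ} [NeZero m] (k : ZMod m) :
    (ZMod.stdAddChar k).re = Real.cos (2 * Real.pi * k.val / m) := by
  have h0 : ZMod.stdAddChar k
      = Complex.exp ((2 * Real.pi * k.val / m : ℝ) * Complex.I) := by
    conv_lhs => rw [show k = (((k.val : ℤ)) : ZMod m) by push_cast [ZMod.natCast_zmod_val]; rfl]
    rw [ZMod.stdAddChar_coe]
    push_cast
    ring_nf
  rw [h0, Complex.exp_ofReal_mul_I_re]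


section Cycle

variable {m : ℕ} [NeZero m] (g : ZMod m → ℝ)

/-- Fourier coefficient. -/
def fc (k : ZMod m) : ℂ := ∑ i : ZMod m, (g i : ℂ) * ZMod.stdAddChar (i * k)

theorem key_identity (c : ZMod m) :
    ∑ k : ZMod m, fc g k * (starRingEnd ℂ) (fc g k) * ZMod.stdAddChar (c * k)
      = (m : ℂ) * ∑ j : ZMod m, ((g (j - c) : ℂ) * (g j : ℂ)) := by
  have hconj : ∀ k, (starRingEnd ℂ) (fc g k)
      = ∑ j : ZMod m, (g j : ℂ) * ZMod.stdAddChar (-(j * k)) := by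
    intro k
    rw [fc, map_sum]
    refine Finset.sum_congr rfl fun j _ => ?_
    rw [map_mul, Complex.conj_ofReal, conj_stdAddChar]
  calc ∑ k : ZMod m, fc g k * (starRingEnd ℂ) (fc g k) * ZMod.stdAddChar (c * k)
      = ∑ k : ZMod m, ∑ i : ZMod m, ∑ j : ZMod m,
          (g i : ℂ) * (g j : ℂ) * ZMod.stdAddChar ((i - j + c) * k) := by
        refine Finset.sum_congr rfl fun k _ => ?_
        rw [hconj k, fc, Finset.sum_mul_sum, Finset.sum_mul]
        refine Finset.sum_congr rfl fun i _ => ?_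
        rw [Finset.sum_mul]
        refine Finset.sum_congr rfl fun j _ => ?_
        have : ZMod.stdAddChar ((i - j + c) * k)
            = ZMod.stdAddChar (i * k) * ZMod.stdAddChar (-(j * k))
              * ZMod.stdAddChar (c * k) := by
          rw [← AddChar.map_add_eq_mul, ← AddChar.map_add_eq_mul]
          ring_nf
        rw [this]; ring
    _ = ∑ i : ZMod m, ∑ j : ZMod m, (g i : ℂ) * (g j : ℂ)
          * (if i - j + c = 0 then (m : ℂ) else 0) := by
        rw [Finset.sum_comm]
        refine Finset.sum_congr rfl fun i _ => ?_
        rw [Finset.sum_comm]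
        refine Finset.sum_congr rfl fun j _ => ?_
        rw [← Finset.mul_sum, char_orthog]
    _ = ∑ j : ZMod m, ∑ i : ZMod m,
          (if i = j - c then (g i : ℂ) * (g j : ℂ) * (m : ℂ) else 0) := by
        rw [Finset.sum_comm]
        refine Finset.sum_congr rfl fun j _ => Finset.sum_congr rfl fun i _ => ?_
        have hiff : i - j + c = 0 ↔ i = j - c := by
          constructor
          · intro h; have := congrArg (· + (j - c)) h; simpa [sub_add_eq_add_sub] using by
              linear_combination (norm := abel) h
          · intro h; rw [h]; abel
        by_cases h : i = j - c
        · rw [if_pos (hiff.mpr h), if_pos h]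
        · rw [if_neg (fun hh => h (hiff.mp hh)), if_neg h, mul_zero]
    _ = (m : ℂ) * ∑ j : ZMod m, ((g (j - c) : ℂ) * (g j : ℂ)) := by
        rw [Finset.mul_sum]
        refine Finset.sum_congr rfl fun j _ => ?_
        rw [Finset.sum_ite_eq' Finset.univ (j - c)
          (fun i => (g i : ℂ) * (g j : ℂ) * (m : ℂ))]
        simp [mul_comm]

theorem key_identity_re (c : ZMod m) :
    ∑ k : ZMod m, Complex.normSq (fc g k) * (ZMod.stdAddChar (c * k)).re
      = (m : ℝ) * ∑ j : ZMod m, g (j - c) * g j := by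
  have h := congrArg Complex.re (key_identity g c)
  rw [show ((m : ℂ) * ∑ j : ZMod m, ((g (j - c) : ℂ) * (g j : ℂ)))
      = (((m : ℝ) * ∑ j : ZMod m, g (j - c) * g j : ℝ) : ℂ) by push_cast; ring] at h
  rw [Complex.ofReal_re] at h
  rw [← h, Complex.re_sum]
  refine Finset.sum_congr rfl fun k _ => ?_
  rw [Complex.mul_conj, Complex.re_ofReal_mul]

theorem fc_zero : fc g 0 = ((∑ i, g i : ℝ) : ℂ) := by
  rw [fc]
  push_cast
  refine Finset.sum_congr rfl fun i _ => ?_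
  rw [mul_zero, AddChar.map_zero_eq_one, mul_one]

end Cycle


theorem stdAddChar_re_le {m : ℕ} [NeZero m] {k : ZMod m} (hk : k ≠ 0) :
    (ZMod.stdAddChar k).re ≤ Real.cos (2 * Real.pi / m) := by
  rw [stdAddChar_re]
  have hm : 0 < m := Nat.pos_of_ne_zero (NeZero.ne m)
  have hM : (1 : ℝ) ≤ (m : ℝ) := by exact_mod_cast hm
  have hMpos : (0 : ℝ) < (m : ℝ) := by linarith
  have hv1 : 1 ≤ k.val := Nat.one_le_iff_ne_zero.mpr (fun h => hk ((ZMod.val_eq_zero k).mp h))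
  have hv2 : k.val < m := ZMod.val_lt k
  set v : ℝ := (k.val : ℝ) with hv
  have hV1 : (1 : ℝ) ≤ v := by rw [hv]; exact_mod_cast hv1
  have hV2 : v ≤ (m : ℝ) - 1 := by
    have h1 : k.val ≤ m - 1 := Nat.le_pred_of_lt hv2
    have h2 : (k.val : ℝ) ≤ ((m - 1 : ℕ) : ℝ) := by exact_mod_cast h1
    rwa [Nat.cast_sub hm, Nat.cast_one] at h2
  have hpi := Real.pi_pos
  have hx0 : 0 ≤ 2 * Real.pi / m := by positivity
  by_cases hy : 2 * Real.pi * v / m ≤ Real.pi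
  · apply Real.cos_le_cos_of_nonneg_of_le_pi hx0 hy
    rw [div_le_div_iff₀ hMpos hMpos]
    nlinarith [mul_nonneg (mul_nonneg (by linarith : (0:ℝ) ≤ 2 * Real.pi)
      (by linarith : (0:ℝ) ≤ v - 1)) (le_of_lt hMpos)]
  · push_neg at hy
    rw [show 2 * Real.pi * v / m = 2 * Real.pi - (2 * Real.pi - 2 * Real.pi * v / m) by ring,
      Real.cos_two_pi_sub]
    apply Real.cos_le_cos_of_nonneg_of_le_pi hx0 (by linarith)
    have hkey : 2 * Real.pi * (1 + v) / m ≤ 2 * Real.pi := by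
      rw [div_le_iff₀ hMpos]; nlinarith
    have hsum : 2 * Real.pi / m + 2 * Real.pi * v / m = 2 * Real.pi * (1 + v) / m := by ring
    linarith

/-- Poincaré inequality for the `m`-cycle, with the sharp constant. -/
theorem cycle_poincare {m : ℕ} [NeZero m] (g : ZMod m → ℝ) :
    (1 - Real.cos (2 * Real.pi / m)) * (∑ i, ∑ j, (g i - g j) ^ 2)
      ≤ (m : ℝ) * ∑ i : ZMod m, (g (i + 1) - g i) ^ 2 := by
  have hm : 0 < m := Nat.pos_of_ne_zero (NeZero.ne m)
  have hMpos : (0 : ℝ) < (m : ℝ) := by exact_mod_cast hm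
  set a : ZMod m → ℝ := fun k => Complex.normSq (fc g k) with ha
  set SQ := ∑ i, g i ^ 2 with hSQ
  set G := ∑ i, g i with hG
  set P := ∑ i : ZMod m, g i * g (i + 1) with hP
  have hcard : (Fintype.card (ZMod m) : ℝ) = (m : ℝ) := by rw [ZMod.card]
  -- Plancherel identities
  have hT : ∑ k, a k = (m : ℝ) * SQ := by
    have h1 := key_identity_re g 0
    simp only [zero_mul, AddChar.map_zero_eq_one, Complex.one_re, mul_one, sub_zero] at h1
    simp only [ha, hSQ]
    rw [h1]
    congr 1
    exact Finset.sum_congr rfl fun j _ => (pow_two (g j)).symm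
  have hR : ∑ k, a k * (ZMod.stdAddChar k).re = (m : ℝ) * P := by
    have h1 := key_identity_re g 1
    have h2 : ∑ j : ZMod m, g (j - 1) * g j = P := by
      rw [hP]
      refine Fintype.sum_equiv (Equiv.subRight (1 : ZMod m)) _ _ fun j => ?_
      simp [Equiv.subRight_apply, sub_add_cancel]
    simp only [one_mul] at h1
    rw [h2] at h1
    simp only [ha]
    exact h1
  have hA0 : a 0 = G ^ 2 := by
    simp only [ha, hG, fc_zero]
    rw [Complex.normSq_ofReal]
    ring
  have hanonneg : ∀ k, 0 ≤ a k := fun k => Complex.normSq_nonneg _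
  -- expansions
  have expand2 : ∑ i, ∑ j, (g i - g j) ^ 2 = 2 * ((m : ℝ) * SQ) - 2 * G ^ 2 := by
    have inner : ∀ i : ZMod m, ∑ j, (g i - g j) ^ 2
        = (m : ℝ) * g i ^ 2 - 2 * g i * G + SQ := by
      intro i
      calc ∑ j, (g i - g j) ^ 2
          = ∑ j, (g i ^ 2 - 2 * g i * g j + g j ^ 2) :=
            Finset.sum_congr rfl fun j _ => by ring
        _ = ∑ j : ZMod m, (g i ^ 2 - 2 * g i * g j) + ∑ j, g j ^ 2 :=
            Finset.sum_add_distrib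
        _ = (∑ _j : ZMod m, g i ^ 2) - (∑ j, 2 * g i * g j) + SQ := by
            rw [Finset.sum_sub_distrib, hSQ]
        _ = (m : ℝ) * g i ^ 2 - 2 * g i * G + SQ := by
            have hmid : ∑ j, 2 * g i * g j = 2 * g i * G := by rw [hG, Finset.mul_sum]
            rw [Finset.sum_const, Finset.card_univ, nsmul_eq_mul, hcard, hmid]
    calc ∑ i, ∑ j, (g i - g j) ^ 2
        = ∑ i, ((m : ℝ) * g i ^ 2 - 2 * g i * G + SQ) :=
          Finset.sum_congr rfl fun i _ => inner i
      _ = (∑ i, ((m : ℝ) * g i ^ 2 - 2 * g i * G)) + ∑ _i : ZMod m, SQ :=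
          Finset.sum_add_distrib
      _ = (∑ i, (m : ℝ) * g i ^ 2) - (∑ i, 2 * g i * G) + (m : ℝ) * SQ := by
          rw [Finset.sum_sub_distrib, Finset.sum_const, Finset.card_univ, nsmul_eq_mul, hcard]
      _ = (m : ℝ) * SQ - 2 * G * G + (m : ℝ) * SQ := by
          have hsq : ∑ i, (m:ℝ) * g i ^ 2 = (m:ℝ) * SQ := by rw [hSQ, Finset.mul_sum]
          have hmid2 : ∑ i, 2 * g i * G = 2 * G * G := by
            calc ∑ i, 2 * g i * G = ∑ i, (2 * G) * g i :=
                  Finset.sum_congr rfl fun i _ => by ring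
              _ = (2 * G) * ∑ i, g i := (Finset.mul_sum _ _ _).symm
              _ = 2 * G * G := by rw [← hG]
          rw [hsq, hmid2]
      _ = 2 * ((m : ℝ) * SQ) - 2 * G ^ 2 := by ring
  have expand1 : ∑ i : ZMod m, (g (i + 1) - g i) ^ 2 = 2 * SQ - 2 * P := by
    calc ∑ i : ZMod m, (g (i + 1) - g i) ^ 2
        = ∑ i : ZMod m, (g (i + 1) ^ 2 - 2 * (g i * g (i + 1)) + g i ^ 2) :=
          Finset.sum_congr rfl fun i _ => by ring
      _ = ∑ i : ZMod m, (g (i + 1) ^ 2 - 2 * (g i * g (i + 1))) + ∑ i, g i ^ 2 :=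
          Finset.sum_add_distrib
      _ = (∑ i : ZMod m, g (i + 1) ^ 2) - (∑ i : ZMod m, 2 * (g i * g (i + 1))) + SQ := by
          rw [Finset.sum_sub_distrib, hSQ]
      _ = SQ - 2 * P + SQ := by
          have hshift : ∑ i : ZMod m, g (i + 1) ^ 2 = SQ := by
            rw [hSQ]
            exact Fintype.sum_equiv (Equiv.addRight (1 : ZMod m)) _ _ fun i => by
              simp [Equiv.coe_addRight]
          have hmid3 : ∑ i : ZMod m, 2 * (g i * g (i + 1)) = 2 * P := by
            rw [hP, Finset.mul_sum]
          rw [hshift, hmid3]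
      _ = 2 * SQ - 2 * P := by ring
  -- pass to the nonzero frequencies
  have hre0 : (ZMod.stdAddChar (0 : ZMod m)).re = 1 := by
    rw [AddChar.map_zero_eq_one, Complex.one_re]
  have hgap : (m : ℝ) * ∑ i : ZMod m, (g (i + 1) - g i) ^ 2
      = 2 * ∑ k ∈ Finset.univ.erase (0 : ZMod m), a k * (1 - (ZMod.stdAddChar k).re) := by
    have h1 : ∑ k ∈ Finset.univ.erase (0 : ZMod m), a k * (1 - (ZMod.stdAddChar k).re)
        = ∑ k, a k * (1 - (ZMod.stdAddChar k).re) :=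
      Finset.sum_erase _ (by rw [hre0]; ring)
    have h2 : ∑ k, a k * (1 - (ZMod.stdAddChar k).re)
        = (∑ k, a k) - ∑ k, a k * (ZMod.stdAddChar k).re := by
      rw [← Finset.sum_sub_distrib]
      exact Finset.sum_congr rfl fun k _ => by ring
    rw [expand1, h1, h2, hT, hR]
    ring
  have hvar : (1 - Real.cos (2 * Real.pi / m)) * (∑ i, ∑ j, (g i - g j) ^ 2)
      = 2 * ∑ k ∈ Finset.univ.erase (0 : ZMod m),
          (1 - Real.cos (2 * Real.pi / m)) * a k := by
    have h1 : ∑ k ∈ Finset.univ.erase (0 : ZMod m), a k = (∑ k, a k) - a 0 :=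
      Finset.sum_erase_eq_sub (Finset.mem_univ 0)
    rw [expand2, ← Finset.mul_sum, h1, hT, hA0]
    ring
  rw [hvar, hgap]
  have hstep : ∀ k ∈ Finset.univ.erase (0 : ZMod m),
      (1 - Real.cos (2 * Real.pi / m)) * a k ≤ a k * (1 - (ZMod.stdAddChar k).re) := by
    intro k hk
    have hk0 : k ≠ 0 := (Finset.mem_erase.mp hk).1
    have hle := stdAddChar_re_le hk0
    calc (1 - Real.cos (2 * Real.pi / m)) * a k
        = a k * (1 - Real.cos (2 * Real.pi / m)) := by ring
      _ ≤ a k * (1 - (ZMod.stdAddChar k).re) :=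
          mul_le_mul_of_nonneg_left (by linarith) (hanonneg k)
  linarith [Finset.sum_le_sum hstep]



theorem walk_get_head {x y : V} {L : List (V × V)} (h : IsWalk x L y) (h0 : 0 < L.length) :
    (L.get ⟨0, h0⟩).1 = x := by
  cases L with
  | nil => simp at h0
  | cons e L => exact h.1

theorem walk_get_succ {x y : V} {L : List (V × V)} (h : IsWalk x L y) :
    ∀ n (hn : n + 1 < L.length) (hn' : n < L.length),
      (L.get ⟨n + 1, hn⟩).1 = (L.get ⟨n, hn'⟩).2 := by
  induction L generalizing x with
  | nil => intro n hn; simp at hn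
  | cons e L ih =>
    intro n hn hn'
    cases n with
    | zero =>
      simp only [List.get]
      exact walk_get_head h.2 (by simpa using hn)
    | succ n =>
      simp only [List.get]
      exact ih h.2 n (by simpa using hn) (by simpa using hn')

theorem walk_get_last {x y : V} {L : List (V × V)} (h : IsWalk x L y) (h0 : 0 < L.length) :
    (L.get ⟨L.length - 1, by omega⟩).2 = y := by
  induction L generalizing x with
  | nil => simp at h0
  | cons e L ih =>
    cases L with
    | nil => have h2 : e.2 = y := h.2; simpa using h2
    | cons e' L' =>
      have := ih h.2 (by simp)
      simpa using this

/-- sum over `Fin` of a function of list entries equals sum over the list. -/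
theorem sum_fin_get {M : Type*} [AddCommMonoid M] (L : List (V × V)) (F : V × V → M) :
    ∑ j : Fin L.length, F (L.get j) = (L.map F).sum := by
  induction L with
  | nil => simp
  | cons e L ih =>
    rw [List.map_cons, List.sum_cons, ← ih]
    simp [Fin.sum_univ_succ]



/-- a list sum as a weighted sum over all possible edges. -/
theorem list_sum_eq_count_sum (L : List (V × V)) (F : V × V → ℝ) :
    (L.map F).sum = ∑ e : V × V, (ecount L e.1 e.2 : ℝ) * F e := by
  induction L with
  | nil => simp [ecount]
  | cons e L ih =>
    rw [List.map_cons, List.sum_cons, ih]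
    have : ∀ e' : V × V, ((ecount (e :: L) e'.1 e'.2 : ℝ)) * F e'
        = (ecount L e'.1 e'.2 : ℝ) * F e' + (if e = e' then 1 else 0) * F e' := by
      intro e'
      rw [ecount_cons]
      push_cast
      ring
    rw [Finset.sum_congr rfl fun e' _ => this e', Finset.sum_add_distrib]
    have h2 : ∑ e' : V × V, (if e = e' then (1:ℝ) else 0) * F e' = F e := by
      rw [Finset.sum_congr rfl (fun e' _ => by
        rw [ite_mul, one_mul, zero_mul])]
      rw [Finset.sum_ite_eq Finset.univ e F]
      simp
    rw [h2]
    ring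

/-- the equivalence `ZMod n ≃ Fin n`. -/
def zmodFinEquiv (n : ℕ) [NeZero n] : ZMod n ≃ Fin n := by
  refine Equiv.ofBijective (fun i => ⟨i.val, ZMod.val_lt i⟩) ?_
  rw [Fintype.bijective_iff_injective_and_card]
  constructor
  · intro a b hab
    exact ZMod.val_injective n (by simpa [Fin.ext_iff] using hab)
  · rw [ZMod.card, Fintype.card_fin]

theorem sum_zmod_eq_sum_fin {M : Type*} [AddCommMonoid M] (n : ℕ) [NeZero n]
    (F : Fin n → M) : ∑ i : ZMod n, F ((zmodFinEquiv n) i) = ∑ j : Fin n, F j :=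
  Fintype.sum_equiv (zmodFinEquiv n) _ _ fun i => rfl


/-- The simple random walk on an Eulerian graph with `m` edges has spectral
gap at least `1 - cos(2π/m)`. -/
theorem stmt0 {V : Type*} [Fintype V] [Nonempty V] (E : V → V → ℕ)
    (hbal : ∀ x, edeg E x = ∑ y, E y x)
    (hdegpos : ∀ x, 1 ≤ edeg E x)
    (hconn : ∀ x y : V, Relation.ReflTransGen (fun a b => 0 < E a b) x y)
    (f : V → ℝ) :
    (1 - Real.cos (2 * Real.pi / (numEdges E : ℝ))) *
        (∑ x, ∑ y, (f x - f y) ^ 2 * statPi E x * statPi E y) ≤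
      ∑ x, ∑ y, (f x - f y) ^ 2 * statPi E x * srw E x y := by
  obtain ⟨x0, L, hLne, hLwalk, hLcount⟩ := exists_euler_circuit E hbal hdegpos hconn
  have hn0 : 0 < L.length := List.length_pos_iff.mpr hLne
  haveI : NeZero L.length := ⟨hn0.ne'⟩
  have hmE : L.length = numEdges E := by
    rw [numEdges, ← sum_sum_ecount L]
    exact Finset.sum_congr rfl fun x _ => Finset.sum_congr rfl fun y _ => hLcount x y
  set vv : ZMod L.length → V × V := fun i => L.get ((zmodFinEquiv L.length) i) with hvv
  set g : ZMod L.length → ℝ := fun i => f (vv i).1 with hg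
  -- the cyclic structure
  have hval : ∀ i : ZMod L.length, (i + 1).val = (i.val + 1) % L.length := by
    intro i
    rw [ZMod.val_add, ZMod.val_one_eq_one_mod]
    conv_rhs => rw [Nat.add_mod i.val 1 L.length,
      Nat.mod_eq_of_lt (ZMod.val_lt i)]
  have hnext : ∀ i : ZMod L.length, (vv (i + 1)).1 = (vv i).2 := by
    intro i
    have hiv : i.val < L.length := ZMod.val_lt i
    by_cases hlt : i.val + 1 < L.length
    · have h1 : (i + 1).val = i.val + 1 := by rw [hval i, Nat.mod_eq_of_lt hlt]
      have h2 : ((zmodFinEquiv L.length) (i + 1) : Fin L.length)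
          = ⟨i.val + 1, hlt⟩ := by
        apply Fin.ext
        simpa [zmodFinEquiv] using h1
      have h3 : ((zmodFinEquiv L.length) i : Fin L.length) = ⟨i.val, hiv⟩ := rfl
      rw [hvv]
      simp only [h2, h3]
      exact walk_get_succ hLwalk i.val hlt hiv
    · have hend : i.val + 1 = L.length := by omega
      have h1 : (i + 1).val = 0 := by rw [hval i, hend, Nat.mod_self]
      have h2 : ((zmodFinEquiv L.length) (i + 1) : Fin L.length) = ⟨0, hn0⟩ := by
        apply Fin.ext
        simpa [zmodFinEquiv] using h1
      have h3 : ((zmodFinEquiv L.length) i : Fin L.length)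
          = ⟨L.length - 1, by omega⟩ := by
        apply Fin.ext
        simp [zmodFinEquiv]
        omega
      rw [hvv]
      simp only [h2, h3]
      rw [walk_get_head hLwalk hn0, walk_get_last hLwalk hn0]
  -- sums over the circuit
  have hsum1 : ∀ F : V × V → ℝ,
      ∑ i : ZMod L.length, F (vv i) = ∑ x, ∑ y, (E x y : ℝ) * F (x, y) := by
    intro F
    calc ∑ i : ZMod L.length, F (vv i)
        = ∑ j : Fin L.length, F (L.get j) :=
          sum_zmod_eq_sum_fin L.length (fun j => F (L.get j))
      _ = (L.map F).sum := sum_fin_get L F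
      _ = ∑ e : V × V, (ecount L e.1 e.2 : ℝ) * F e := list_sum_eq_count_sum L F
      _ = ∑ x, ∑ y, (E x y : ℝ) * F (x, y) := by
          rw [Fintype.sum_prod_type]
          exact Finset.sum_congr rfl fun x _ => Finset.sum_congr rfl fun y _ => by
            rw [hLcount x y]
  have hsum2 : ∀ h : V → ℝ,
      ∑ i : ZMod L.length, h ((vv i).1) = ∑ x, (edeg E x : ℝ) * h x := by
    intro h
    rw [hsum1 (fun e => h e.1)]
    refine Finset.sum_congr rfl fun x _ => ?_
    rw [edeg]
    push_cast
    rw [Finset.sum_mul]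
  -- the two quadratic forms
  have hdir : ∑ i : ZMod L.length, (g (i + 1) - g i) ^ 2
      = ∑ x, ∑ y, (E x y : ℝ) * (f x - f y) ^ 2 := by
    have h1 : ∀ i : ZMod L.length, (g (i + 1) - g i) ^ 2
        = (fun e : V × V => (f e.1 - f e.2) ^ 2) (vv i) := by
      intro i
      simp only [hg]
      rw [hnext i]
      ring
    rw [Finset.sum_congr rfl fun i _ => h1 i]
    exact hsum1 (fun e : V × V => (f e.1 - f e.2) ^ 2)
  have hvar : ∑ i : ZMod L.length, ∑ j : ZMod L.length, (g i - g j) ^ 2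
      = ∑ x, ∑ y, (edeg E x : ℝ) * ((edeg E y : ℝ) * (f x - f y) ^ 2) := by
    have inner : ∀ i : ZMod L.length, ∑ j : ZMod L.length, (g i - g j) ^ 2
        = ∑ y, (edeg E y : ℝ) * (f ((vv i).1) - f y) ^ 2 := by
      intro i
      rw [hg]
      exact hsum2 (fun y => (f ((vv i).1) - f y) ^ 2)
    rw [Finset.sum_congr rfl fun i _ => inner i]
    rw [hsum2 (fun x => ∑ y, (edeg E y : ℝ) * (f x - f y) ^ 2)]
    exact Finset.sum_congr rfl fun x _ => Finset.mul_sum _ _ _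
  -- the cycle Poincaré inequality
  have key := cycle_poincare (m := L.length) g
  rw [hdir, hvar] at key
  have hMn : (L.length : ℝ) = ((numEdges E : ℕ) : ℝ) := by exact_mod_cast hmE
  rw [hMn] at key
  set M : ℝ := ((numEdges E : ℕ) : ℝ) with hM
  have hMpos : (0 : ℝ) < M := by
    rw [← hMn]
    exact_mod_cast hn0
  have hMne : M ≠ 0 := hMpos.ne'
  have hdegR : ∀ x, (0 : ℝ) < (edeg E x : ℝ) := fun x => by exact_mod_cast hdegpos x
  -- rewrite both sides of the goal
  have hL : ∑ x, ∑ y, (f x - f y) ^ 2 * statPi E x * statPi E y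
      = (∑ x, ∑ y, (edeg E x : ℝ) * ((edeg E y : ℝ) * (f x - f y) ^ 2)) / M ^ 2 := by
    rw [Finset.sum_div]
    refine Finset.sum_congr rfl fun x _ => ?_
    rw [Finset.sum_div]
    refine Finset.sum_congr rfl fun y _ => ?_
    rw [statPi, statPi, ← hM]
    field_simp
  have hR : ∑ x, ∑ y, (f x - f y) ^ 2 * statPi E x * srw E x y
      = (∑ x, ∑ y, (E x y : ℝ) * (f x - f y) ^ 2) / M := by
    rw [Finset.sum_div]
    refine Finset.sum_congr rfl fun x _ => ?_
    rw [Finset.sum_div]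
    refine Finset.sum_congr rfl fun y _ => ?_
    have hdx : (edeg E x : ℝ) ≠ 0 := (hdegR x).ne'
    rw [statPi, srw, ← hM]
    field_simp
  rw [hL, hR]
  calc (1 - Real.cos (2 * Real.pi / M))
        * ((∑ x, ∑ y, (edeg E x : ℝ) * ((edeg E y : ℝ) * (f x - f y) ^ 2)) / M ^ 2)
      = ((1 - Real.cos (2 * Real.pi / M))
          * ∑ x, ∑ y, (edeg E x : ℝ) * ((edeg E y : ℝ) * (f x - f y) ^ 2)) / M ^ 2 := by
        ring
    _ ≤ (M * ∑ x, ∑ y, (E x y : ℝ) * (f x - f y) ^ 2) / M ^ 2 := by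
        apply div_le_div_of_nonneg_right key (by positivity)
    _ = (∑ x, ∑ y, (E x y : ℝ) * (f x - f y) ^ 2) / M := by
        rw [pow_two]
        rw [mul_div_mul_left _ _ hMpos.ne']

end Stmt0
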